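/- Let ε > 0 and let N ≥ 1 be an integer. There exists a constant C_ε > 0, depending only on ε, such that for any two strictly ordered particle solutions x and y on [0,∞) one has, for all t ≥ 0, ‖x(t) − y(t)‖_N ≤ e^{C_ε t}·‖x(0) − y(0)‖_N, where ‖v‖_N = ( (1/N)·Σ_{i=0}^{N} v_i² )^{1/2} for v ∈ ℝ^{N+1}. -/

import Mathlib

open MeasureTheory Real Set
open scoped ENNReal

/-- Scaled Morse potential `W_ε(x) = (1/(2ε)) e^{-|x|/ε}`. -/
noncomputable def Morse (ε x : ℝ) : ℝ := (1 / (2 * ε)) * Real.exp (-|x| / ε)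

/-- Derivative of the scaled Morse potential,
`W_ε'(x) = -(1/(2ε²)) sign(x) e^{-|x|/ε}`. -/
noncomputable def Morse' (ε x : ℝ) : ℝ :=
  -(1 / (2 * ε ^ 2)) * Real.sign x * Real.exp (-|x| / ε)

/-- Right-hand side of the particle ODE system:
`(1/N) ∑_{k=0}^{N-1} (W_ε(x_{k+1}-x_i) - W_ε(x_k-x_i))/(x_{k+1}-x_k)`. -/
noncomputable def particleRHS (ε : ℝ) (N : ℕ) (x : ℕ → ℝ) (i : ℕ) : ℝ :=
  (1 / (N : ℝ)) * ∑ k ∈ Finset.range N,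
    (Morse ε (x (k + 1) - x i) - Morse ε (x k - x i)) / (x (k + 1) - x k)

/-- A strictly ordered particle solution on `[0,∞)`:  a differentiable curve
`x = (x_0,…,x_N)` with `x_0(t) < ⋯ < x_N(t)` for all `t ≥ 0`, solving the particle ODE. -/
def IsParticleSol (ε : ℝ) (N : ℕ) (x : ℝ → ℕ → ℝ) : Prop :=
  (∀ t : ℝ, 0 ≤ t → ∀ i < N, x t i < x t (i + 1)) ∧
  (∀ i ≤ N, ∀ t : ℝ, 0 ≤ t →
    HasDerivWithinAt (fun s => x s i) (particleRHS ε N (x t) i) (Set.Ici 0) t)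

/-- The discrete (piecewise constant) density
`ρ^N(y,t) = ∑_{k=0}^{N-1} R_k(t) 1_{[x_k(t), x_{k+1}(t))}(y)` with `R_k = 1/(N d_k)`. -/
noncomputable def discDens (N : ℕ) (x : ℝ → ℕ → ℝ) (y t : ℝ) : ℝ :=
  ∑ k ∈ Finset.range N,
    Set.indicator (Set.Ico (x t k) (x t (k + 1)))
      (fun _ => 1 / ((N : ℝ) * (x t (k + 1) - x t k))) y

/-- Convolution in the space variable: `(W ∗ ρ)(x) = ∫ W(x-y) ρ(y) dy`. -/
noncomputable def conv (W ρ : ℝ → ℝ) (x : ℝ) : ℝ := ∫ y, W (x - y) * ρ y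

/-- The scaled Euclidean norm `‖v‖_N = ((1/N) ∑_{i=0}^{N} v_i²)^{1/2}` on `ℝ^{N+1}`. -/
noncomputable def scaledNorm (N : ℕ) (v : ℕ → ℝ) : ℝ :=
  Real.sqrt ((1 / (N : ℝ)) * ∑ i ∈ Finset.range (N + 1), (v i) ^ 2)

noncomputable def phiM (ε u : ℝ) : ℝ := Morse ε u + |u| / (2 * ε ^ 2)

noncomputable def ggM (ε u : ℝ) : ℝ := Real.sign u * (1 - Real.exp (-|u| / ε)) / (2 * ε ^ 2)

lemma hasDerivAt_phiM (ε : ℝ) (hε : 0 < ε) (u : ℝ) : HasDerivAt (phiM ε) (ggM ε u) u := by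
  have hpp : ∀ v : ℝ, HasDerivAt (fun w => (1 / (2 * ε)) * Real.exp (-w / ε) + w / (2 * ε ^ 2))
      ((1 - Real.exp (-v / ε)) / (2 * ε ^ 2)) v := by
    intro v
    have h1 : HasDerivAt (fun w : ℝ => -w / ε) (-1 / ε) v := by
      simpa using ((hasDerivAt_id v).neg.div_const ε)
    have h2 := (h1.exp.const_mul (1 / (2 * ε)))
    have h3 := (hasDerivAt_id v).div_const (2 * ε ^ 2)
    refine (h2.add h3).congr_deriv ?_
    field_simp
    ring
  have hpm : ∀ v : ℝ, HasDerivAt (fun w => (1 / (2 * ε)) * Real.exp (w / ε) - w / (2 * ε ^ 2))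
      (-(1 - Real.exp (v / ε)) / (2 * ε ^ 2)) v := by
    intro v
    have h1 : HasDerivAt (fun w : ℝ => w / ε) (1 / ε) v := by
      simpa using (hasDerivAt_id v).div_const ε
    have h2 := (h1.exp.const_mul (1 / (2 * ε)))
    have h3 := (hasDerivAt_id v).div_const (2 * ε ^ 2)
    refine (h2.sub h3).congr_deriv ?_
    field_simp
    ring
  rcases lt_trichotomy u 0 with hu | hu | hu
  · have heq : (fun w => (1 / (2 * ε)) * Real.exp (w / ε) - w / (2 * ε ^ 2)) =ᶠ[nhds u] phiM ε := by
      filter_upwards [Iio_mem_nhds hu] with w hw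
      simp only [phiM, Morse, abs_of_neg (mem_Iio.1 hw)]
      ring_nf
    have := (hpm u).congr_of_eventuallyEq heq.symm
    refine this.congr_deriv ?_
    rw [ggM, Real.sign_of_neg hu, abs_of_neg hu]
    ring_nf
  · subst hu
    have hIci : HasDerivWithinAt (phiM ε) ((1 - Real.exp (-(0:ℝ) / ε)) / (2 * ε ^ 2)) (Ici 0) 0 := by
      refine ((hpp 0).hasDerivWithinAt).congr ?_ ?_
      · intro w hw
        simp only [phiM, Morse, abs_of_nonneg (mem_Ici.1 hw)]
      · simp [phiM, Morse]
    have hIic : HasDerivWithinAt (phiM ε) ((1 - Real.exp (-(0:ℝ) / ε)) / (2 * ε ^ 2)) (Iic 0) 0 := by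
      have h0 : HasDerivWithinAt (phiM ε) (-(1 - Real.exp ((0:ℝ) / ε)) / (2 * ε ^ 2)) (Iic 0) 0 := by
        refine ((hpm 0).hasDerivWithinAt).congr ?_ ?_
        · intro w hw
          simp only [phiM, Morse, abs_of_nonpos (mem_Iic.1 hw)]
          ring_nf
        · simp [phiM, Morse]
      convert h0 using 1
      simp
    have hu := hIic.union hIci
    rw [Iic_union_Ici] at hu
    have h := hu.hasDerivAt (by simp)
    refine h.congr_deriv ?_
    simp [ggM]
  · have heq : (fun w => (1 / (2 * ε)) * Real.exp (-w / ε) + w / (2 * ε ^ 2)) =ᶠ[nhds u] phiM ε := by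
      filter_upwards [Ioi_mem_nhds hu] with w hw
      simp only [phiM, Morse, abs_of_pos (mem_Ioi.1 hw)]
    have := (hpp u).congr_of_eventuallyEq heq.symm
    refine this.congr_deriv ?_
    rw [ggM, Real.sign_of_pos hu, abs_of_pos hu]
    ring_nf

lemma hasDerivAt_ggM (ε : ℝ) (hε : 0 < ε) (u : ℝ) :
    HasDerivAt (ggM ε) (Real.exp (-|u| / ε) / (2 * ε ^ 3)) u := by
  have hpp : ∀ v : ℝ, HasDerivAt (fun w => (1 - Real.exp (-w / ε)) / (2 * ε ^ 2))
      (Real.exp (-v / ε) / (2 * ε ^ 3)) v := by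
    intro v
    have h1 : HasDerivAt (fun w : ℝ => -w / ε) (-1 / ε) v := by
      simpa using ((hasDerivAt_id v).neg.div_const ε)
    have h2 := ((hasDerivAt_const v (1:ℝ)).sub h1.exp).div_const (2 * ε ^ 2)
    refine h2.congr_deriv ?_
    field_simp
    ring
  have hpm : ∀ v : ℝ, HasDerivAt (fun w => -(1 - Real.exp (w / ε)) / (2 * ε ^ 2))
      (Real.exp (v / ε) / (2 * ε ^ 3)) v := by
    intro v
    have h1 : HasDerivAt (fun w : ℝ => w / ε) (1 / ε) v := by
      simpa using (hasDerivAt_id v).div_const ε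
    have h2 := (((hasDerivAt_const v (1:ℝ)).sub h1.exp).div_const (2 * ε ^ 2)).neg
    convert h2 using 1
    · rfl
    · rfl
    · funext w; simp only [Pi.neg_apply, Pi.sub_apply]; ring
    · field_simp; ring
  rcases lt_trichotomy u 0 with hu | hu | hu
  · have heq : (fun w => -(1 - Real.exp (w / ε)) / (2 * ε ^ 2)) =ᶠ[nhds u] ggM ε := by
      filter_upwards [Iio_mem_nhds hu] with w hw
      rw [ggM, Real.sign_of_neg (mem_Iio.1 hw), abs_of_neg (mem_Iio.1 hw)]
      ring_nf
    have := (hpm u).congr_of_eventuallyEq heq.symm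
    refine this.congr_deriv ?_
    rw [abs_of_neg hu]; ring_nf
  · subst hu
    have hIci : HasDerivWithinAt (ggM ε) (Real.exp (-(0:ℝ) / ε) / (2 * ε ^ 3)) (Ici 0) 0 := by
      refine ((hpp 0).hasDerivWithinAt).congr ?_ ?_
      · intro w hw
        rcases eq_or_lt_of_le (mem_Ici.1 hw) with h | h
        · simp [ggM, ← h]
        · rw [ggM, Real.sign_of_pos h, abs_of_pos h]; ring
      · simp [ggM]
    have hIic : HasDerivWithinAt (ggM ε) (Real.exp (-(0:ℝ) / ε) / (2 * ε ^ 3)) (Iic 0) 0 := by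
      have h0 : HasDerivWithinAt (ggM ε) (Real.exp ((0:ℝ) / ε) / (2 * ε ^ 3)) (Iic 0) 0 := by
        refine ((hpm 0).hasDerivWithinAt).congr ?_ ?_
        · intro w hw
          rcases eq_or_lt_of_le (mem_Iic.1 hw) with h | h
          · simp [ggM, h]
          · rw [ggM, Real.sign_of_neg h, abs_of_neg h]; ring_nf
        · simp [ggM]
      convert h0 using 2
      simp
    have hu2 := hIic.union hIci
    rw [Iic_union_Ici] at hu2
    have h := hu2.hasDerivAt (by simp)
    refine h.congr_deriv ?_
    simp
  · have heq : (fun w => (1 - Real.exp (-w / ε)) / (2 * ε ^ 2)) =ᶠ[nhds u] ggM ε := by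
      filter_upwards [Ioi_mem_nhds hu] with w hw
      rw [ggM, Real.sign_of_pos (mem_Ioi.1 hw), abs_of_pos (mem_Ioi.1 hw)]
      ring
    have := (hpp u).congr_of_eventuallyEq heq.symm
    refine this.congr_deriv ?_
    rw [abs_of_pos hu]

lemma ggM_lip (ε : ℝ) (hε : 0 < ε) (u v : ℝ) :
    |ggM ε u - ggM ε v| ≤ (1 / (2 * ε ^ 3)) * |u - v| := by
  have hbound : ∀ w : ℝ, w ∈ (Set.univ : Set ℝ) →
      ‖Real.exp (-|w| / ε) / (2 * ε ^ 3)‖ ≤ 1 / (2 * ε ^ 3) := by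
    intro w _
    rw [Real.norm_eq_abs, abs_of_nonneg (by positivity)]
    rw [div_le_div_iff₀ (by positivity) (by positivity)]
    have : Real.exp (-|w| / ε) ≤ 1 := Real.exp_le_one_iff.2 (by
      apply div_nonpos_of_nonpos_of_nonneg <;> simp [abs_nonneg, hε.le])
    nlinarith [pow_pos hε 3]
  have := convex_univ.norm_image_sub_le_of_norm_hasDerivWithin_le
    (f := ggM ε) (f' := fun w => Real.exp (-|w| / ε) / (2 * ε ^ 3)) (C := 1 / (2 * ε ^ 3))
    (fun w _ => (hasDerivAt_ggM ε hε w).hasDerivWithinAt) hbound (mem_univ v) (mem_univ u)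
  simpa [Real.norm_eq_abs] using this

lemma ggM_cont (ε : ℝ) (hε : 0 < ε) : Continuous (ggM ε) :=
  continuous_iff_continuousAt.2 fun u => (hasDerivAt_ggM ε hε u).continuousAt

/-- Integral representation of the divided difference of `phiM`. -/
lemma dd_rep (ε : ℝ) (hε : 0 < ε) (a b : ℝ) (hab : a < b) :
    (phiM ε b - phiM ε a) / (b - a) = ∫ s in (0:ℝ)..1, ggM ε ((b - a) * s + a) := by
  have hne : b - a ≠ 0 := ne_of_gt (sub_pos.2 hab)
  have hftc : ∫ u in a..b, ggM ε u = phiM ε b - phiM ε a :=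
    intervalIntegral.integral_eq_sub_of_hasDerivAt (fun u _ => hasDerivAt_phiM ε hε u)
      ((ggM_cont ε hε).intervalIntegrable a b)
  rw [intervalIntegral.integral_comp_mul_add (ggM ε) hne a]
  simp only [mul_zero, zero_add, mul_one, sub_add_cancel, hftc, smul_eq_mul]
  rw [div_eq_inv_mul]

/-- Lipschitz estimate for divided differences of `phiM`. -/
lemma dd_lip (ε : ℝ) (hε : 0 < ε) (a b a' b' : ℝ) (hab : a < b) (hab' : a' < b') :
    |(phiM ε b - phiM ε a) / (b - a) - (phiM ε b' - phiM ε a') / (b' - a')| ≤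
      (1 / (2 * ε ^ 3)) * (|a - a'| + |b - b'|) := by
  rw [dd_rep ε hε a b hab, dd_rep ε hε a' b' hab']
  have hi1 : IntervalIntegrable (fun s => ggM ε ((b - a) * s + a)) volume 0 1 :=
    ((ggM_cont ε hε).comp (by continuity)).intervalIntegrable 0 1
  have hi2 : IntervalIntegrable (fun s => ggM ε ((b' - a') * s + a')) volume 0 1 :=
    ((ggM_cont ε hε).comp (by continuity)).intervalIntegrable 0 1
  rw [← intervalIntegral.integral_sub hi1 hi2]
  have hb := intervalIntegral.norm_integral_le_of_norm_le_const
    (C := (1 / (2 * ε ^ 3)) * (|a - a'| + |b - b'|))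
    (f := fun s => ggM ε ((b - a) * s + a) - ggM ε ((b' - a') * s + a')) (a := (0:ℝ)) (b := 1) ?_
  · simpa [Real.norm_eq_abs] using hb
  · intro s hs
    rw [Set.uIoc_of_le (by norm_num : (0:ℝ) ≤ 1)] at hs
    obtain ⟨hs0, hs1⟩ := hs
    rw [Real.norm_eq_abs]
    calc |ggM ε ((b - a) * s + a) - ggM ε ((b' - a') * s + a')|
        ≤ (1 / (2 * ε ^ 3)) * |((b - a) * s + a) - ((b' - a') * s + a')| := ggM_lip ε hε _ _
      _ ≤ (1 / (2 * ε ^ 3)) * (|a - a'| + |b - b'|) := by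
          apply mul_le_mul_of_nonneg_left _ (by positivity)
          have h1 : ((b - a) * s + a) - ((b' - a') * s + a') = (1 - s) * (a - a') + s * (b - b') := by
            ring
          rw [h1]
          calc |(1 - s) * (a - a') + s * (b - b')| ≤ |(1 - s) * (a - a')| + |s * (b - b')| :=
                abs_add_le _ _
            _ ≤ |a - a'| + |b - b'| := by
                rw [abs_mul, abs_mul, abs_of_nonneg (by linarith : (0:ℝ) ≤ 1 - s),
                  abs_of_nonneg hs0.le]
                have := abs_nonneg (a - a'); have := abs_nonneg (b - b')
                nlinarith

/-- Key per-term Lipschitz bound for divided differences of the Morse potential,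
for pairs on a common side of the origin. -/
lemma morse_dd_lip (ε : ℝ) (hε : 0 < ε) (a b a' b' : ℝ) (hab : a < b) (hab' : a' < b')
    (hsgn : (0 ≤ a ∧ 0 ≤ a') ∨ (b ≤ 0 ∧ b' ≤ 0)) :
    |(Morse ε b - Morse ε a) / (b - a) - (Morse ε b' - Morse ε a') / (b' - a')| ≤
      (1 / (2 * ε ^ 3)) * (|a - a'| + |b - b'|) := by
  have hne : b - a ≠ 0 := ne_of_gt (sub_pos.2 hab)
  have hne' : b' - a' ≠ 0 := ne_of_gt (sub_pos.2 hab')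
  have hM : ∀ u : ℝ, Morse ε u = phiM ε u - |u| / (2 * ε ^ 2) := by
    intro u; rw [phiM]; ring
  rcases hsgn with ⟨ha, ha'⟩ | ⟨hb, hb'⟩
  · have e1 : (Morse ε b - Morse ε a) / (b - a) =
        (phiM ε b - phiM ε a) / (b - a) - 1 / (2 * ε ^ 2) := by
      rw [hM, hM, abs_of_nonneg (le_trans ha hab.le), abs_of_nonneg ha]
      field_simp
      ring
    have e2 : (Morse ε b' - Morse ε a') / (b' - a') =
        (phiM ε b' - phiM ε a') / (b' - a') - 1 / (2 * ε ^ 2) := by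
      rw [hM, hM, abs_of_nonneg (le_trans ha' hab'.le), abs_of_nonneg ha']
      field_simp
      ring
    rw [e1, e2]
    have : (phiM ε b - phiM ε a) / (b - a) - 1 / (2 * ε ^ 2) -
        ((phiM ε b' - phiM ε a') / (b' - a') - 1 / (2 * ε ^ 2)) =
        (phiM ε b - phiM ε a) / (b - a) - (phiM ε b' - phiM ε a') / (b' - a') := by ring
    rw [this]
    exact dd_lip ε hε a b a' b' hab hab'
  · have e1 : (Morse ε b - Morse ε a) / (b - a) =
        (phiM ε b - phiM ε a) / (b - a) + 1 / (2 * ε ^ 2) := by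
      rw [hM, hM, abs_of_nonpos hb, abs_of_nonpos (le_trans hab.le hb)]
      field_simp
      ring
    have e2 : (Morse ε b' - Morse ε a') / (b' - a') =
        (phiM ε b' - phiM ε a') / (b' - a') + 1 / (2 * ε ^ 2) := by
      rw [hM, hM, abs_of_nonpos hb', abs_of_nonpos (le_trans hab'.le hb')]
      field_simp
      ring
    rw [e1, e2]
    have : (phiM ε b - phiM ε a) / (b - a) + 1 / (2 * ε ^ 2) -
        ((phiM ε b' - phiM ε a') / (b' - a') + 1 / (2 * ε ^ 2)) =
        (phiM ε b - phiM ε a) / (b - a) - (phiM ε b' - phiM ε a') / (b' - a') := by ring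
    rw [this]
    exact dd_lip ε hε a b a' b' hab hab'

lemma mono_of_ord {N : ℕ} {u : ℕ → ℝ} (h : ∀ k < N, u k < u (k + 1)) :
    ∀ i j, i ≤ j → j ≤ N → u i ≤ u j := by
  intro i j hij hjN
  induction hij with
  | refl => exact le_rfl
  | @step m hm ih =>
    exact le_trans (ih (by omega)) (h m (by omega)).le

/-- Lipschitz bound for the particle right-hand side. -/
lemma rhs_lip (ε : ℝ) (hε : 0 < ε) (N : ℕ) (u v : ℕ → ℝ)
    (hu : ∀ k < N, u k < u (k + 1)) (hv : ∀ k < N, v k < v (k + 1)) (i : ℕ) (hi : i ≤ N) :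
    |particleRHS ε N u i - particleRHS ε N v i| ≤
      (1 / (2 * ε ^ 3)) * ((1 / (N : ℝ)) * ∑ k ∈ Finset.range N,
        ((|u k - v k| + |u i - v i|) + (|u (k + 1) - v (k + 1)| + |u i - v i|))) := by
  rw [particleRHS, particleRHS, ← mul_sub, ← Finset.sum_sub_distrib]
  rw [abs_mul, abs_of_nonneg (by positivity : (0:ℝ) ≤ 1 / (N : ℝ))]
  have key : |∑ k ∈ Finset.range N,
      ((Morse ε (u (k + 1) - u i) - Morse ε (u k - u i)) / (u (k + 1) - u k) -
        (Morse ε (v (k + 1) - v i) - Morse ε (v k - v i)) / (v (k + 1) - v k))| ≤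
      ∑ k ∈ Finset.range N, (1 / (2 * ε ^ 3)) *
        ((|u k - v k| + |u i - v i|) + (|u (k + 1) - v (k + 1)| + |u i - v i|)) := by
    refine le_trans (Finset.abs_sum_le_sum_abs _ _) (Finset.sum_le_sum ?_)
    intro k hk
    rw [Finset.mem_range] at hk
    have hterm : ∀ w : ℕ → ℝ, (Morse ε (w (k + 1) - w i) - Morse ε (w k - w i)) / (w (k + 1) - w k)
        = (Morse ε (w (k + 1) - w i) - Morse ε (w k - w i)) / ((w (k + 1) - w i) - (w k - w i)) := by
      intro w; congr 1; ring
    rw [hterm u, hterm v]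
    have habu : u k - u i < u (k + 1) - u i := by have := hu k hk; linarith
    have habv : v k - v i < v (k + 1) - v i := by have := hv k hk; linarith
    have hsgn : (0 ≤ u k - u i ∧ 0 ≤ v k - v i) ∨
        (u (k + 1) - u i ≤ 0 ∧ v (k + 1) - v i ≤ 0) := by
      rcases le_or_gt i k with h | h
      · left
        constructor
        · have := mono_of_ord hu i k h (by omega); linarith
        · have := mono_of_ord hv i k h (by omega); linarith
      · right
        constructor
        · have := mono_of_ord hu (k + 1) i (by omega) hi; linarith
        · have := mono_of_ord hv (k + 1) i (by omega) hi; linarith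
    refine le_trans (morse_dd_lip ε hε _ _ _ _ habu habv hsgn) ?_
    rw [mul_le_mul_iff_right₀ (by positivity : (0:ℝ) < 1 / (2 * ε ^ 3))]
    have h1 : |u k - u i - (v k - v i)| ≤ |u k - v k| + |u i - v i| := by
      have : u k - u i - (v k - v i) = (u k - v k) - (u i - v i) := by ring
      rw [this]; exact abs_sub _ _
    have h2 : |u (k + 1) - u i - (v (k + 1) - v i)| ≤ |u (k + 1) - v (k + 1)| + |u i - v i| := by
      have : u (k + 1) - u i - (v (k + 1) - v i) = (u (k + 1) - v (k + 1)) - (u i - v i) := by ring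
      rw [this]; exact abs_sub _ _
    linarith
  calc 1 / (N : ℝ) * |∑ k ∈ Finset.range N,
        ((Morse ε (u (k + 1) - u i) - Morse ε (u k - u i)) / (u (k + 1) - u k) -
          (Morse ε (v (k + 1) - v i) - Morse ε (v k - v i)) / (v (k + 1) - v k))| ≤
      1 / (N : ℝ) * ∑ k ∈ Finset.range N, (1 / (2 * ε ^ 3)) *
        ((|u k - v k| + |u i - v i|) + (|u (k + 1) - v (k + 1)| + |u i - v i|)) :=
      mul_le_mul_of_nonneg_left key (by positivity)
    _ = (1 / (2 * ε ^ 3)) * ((1 / (N : ℝ)) * ∑ k ∈ Finset.range N,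
        ((|u k - v k| + |u i - v i|) + (|u (k + 1) - v (k + 1)| + |u i - v i|))) := by
      rw [← Finset.mul_sum]; ring

lemma sum_bound (N : ℕ) (hN : 1 ≤ N) (M : ℝ) (hM : 0 ≤ M) (e B : ℕ → ℝ)
    (hB : ∀ i ∈ Finset.range (N + 1), |B i| ≤ M * ((1 / (N : ℝ)) * ∑ k ∈ Finset.range N,
      ((|e k| + |e i|) + (|e (k + 1)| + |e i|)))) :
    |∑ i ∈ Finset.range (N + 1), 2 * e i * B i| ≤
      (12 * M) * ∑ i ∈ Finset.range (N + 1), (e i) ^ 2 := by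
  have hNpos : (0 : ℝ) < N := by exact_mod_cast Nat.pos_of_ne_zero (by omega)
  have hN1 : (1 : ℝ) ≤ N := by exact_mod_cast hN
  set S := ∑ j ∈ Finset.range (N + 1), |e j| with hS
  set V := ∑ j ∈ Finset.range (N + 1), (e j) ^ 2 with hV
  have hS0 : 0 ≤ S := Finset.sum_nonneg fun j _ => abs_nonneg _
  have hV0 : 0 ≤ V := Finset.sum_nonneg fun j _ => sq_nonneg _
  have hSk : ∑ k ∈ Finset.range N, |e k| ≤ S :=
    Finset.sum_le_sum_of_subset_of_nonneg
      (Finset.range_subset_range.2 (by omega)) (fun j _ _ => abs_nonneg _)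
  have hSk1 : ∑ k ∈ Finset.range N, |e (k + 1)| ≤ S := by
    have h := Finset.sum_range_succ' (fun j => |e j|) N
    have := abs_nonneg (e 0)
    rw [hS]
    linarith [h.symm.le]
  have hCS : S ^ 2 ≤ ((N : ℝ) + 1) * V := by
    have h := sq_sum_le_card_mul_sum_sq (s := Finset.range (N + 1)) (f := fun j => |e j|)
    simpa [sq_abs, Finset.card_range] using h
  have hBi : ∀ i ∈ Finset.range (N + 1), |B i| ≤ 2 * M * S / N + 2 * M * |e i| := by
    intro i hi
    refine le_trans (hB i hi) ?_
    have hin : ∑ k ∈ Finset.range N, ((|e k| + |e i|) + (|e (k + 1)| + |e i|)) ≤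
        2 * S + (N : ℝ) * (2 * |e i|) := by
      have h1 : ∑ k ∈ Finset.range N, ((|e k| + |e i|) + (|e (k + 1)| + |e i|)) =
          (∑ k ∈ Finset.range N, |e k|) + (∑ k ∈ Finset.range N, |e (k + 1)|) +
            (N : ℝ) * (2 * |e i|) := by
        simp only [Finset.sum_add_distrib, Finset.sum_const, Finset.card_range, nsmul_eq_mul]
        ring
      linarith
    calc M * ((1 / (N : ℝ)) * ∑ k ∈ Finset.range N, ((|e k| + |e i|) + (|e (k + 1)| + |e i|)))
        ≤ M * ((1 / (N : ℝ)) * (2 * S + (N : ℝ) * (2 * |e i|))) := by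
          apply mul_le_mul_of_nonneg_left _ hM
          apply mul_le_mul_of_nonneg_left hin (by positivity)
      _ = 2 * M * S / N + 2 * M * |e i| := by field_simp
  calc |∑ i ∈ Finset.range (N + 1), 2 * e i * B i|
      ≤ ∑ i ∈ Finset.range (N + 1), |2 * e i * B i| := Finset.abs_sum_le_sum_abs _ _
    _ ≤ ∑ i ∈ Finset.range (N + 1), 2 * |e i| * (2 * M * S / N + 2 * M * |e i|) := by
        refine Finset.sum_le_sum fun i hi => ?_
        rw [abs_mul, abs_mul, abs_two]
        exact mul_le_mul_of_nonneg_left (hBi i hi) (by positivity)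
    _ = (4 * M * S / N) * S + 4 * M * V := by
        have hterm : ∀ i, 2 * |e i| * (2 * M * S / N + 2 * M * |e i|) =
            (4 * M * S / N) * |e i| + (4 * M) * (e i) ^ 2 := fun i => by
          rw [← sq_abs (e i)]; ring
        rw [Finset.sum_congr rfl fun i _ => hterm i, Finset.sum_add_distrib,
          ← Finset.mul_sum, ← Finset.mul_sum, ← hS, ← hV]
    _ ≤ 12 * M * V := by
        have h1 : (4 * M * S / N) * S = (4 * M * S * S) / N := by ring
        rw [h1]
        rw [div_add' _ _ _ (ne_of_gt hNpos), div_le_iff₀ hNpos]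
        have hSS : S * S = S ^ 2 := by ring
        nlinarith [mul_le_mul_of_nonneg_left hCS hM, mul_nonneg hM hV0]

/-- stability. For every `ε > 0` there is a constant `C_ε > 0`,
depending only on `ε`, such that any two strictly ordered particle solutions satisfy
`‖x(t) - y(t)‖_N ≤ e^{C_ε t} ‖x(0) - y(0)‖_N` for all `t ≥ 0`. -/
theorem stmt5 (ε : ℝ) (hε : 0 < ε) :
    ∃ C : ℝ, 0 < C ∧ ∀ N : ℕ, 1 ≤ N → ∀ x y : ℝ → ℕ → ℝ,
      IsParticleSol ε N x → IsParticleSol ε N y → ∀ t : ℝ, 0 ≤ t →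
        scaledNorm N (fun i => x t i - y t i) ≤
          Real.exp (C * t) * scaledNorm N (fun i => x 0 i - y 0 i) := by
  set M : ℝ := 1 / (2 * ε ^ 3) with hM
  have hMpos : 0 < M := by positivity
  refine ⟨6 * M, by positivity, ?_⟩
  intro N hN x y hx hy t ht
  set V : ℝ → ℝ := fun s => ∑ i ∈ Finset.range (N + 1), (x s i - y s i) ^ 2 with hVdef
  set D : ℝ → ℝ := fun s => ∑ i ∈ Finset.range (N + 1),
    2 * (x s i - y s i) * (particleRHS ε N (x s) i - particleRHS ε N (y s) i) with hDdef
  have hVnonneg : ∀ s, 0 ≤ V s := fun s => Finset.sum_nonneg fun i _ => sq_nonneg _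
  have hVd : ∀ s : ℝ, 0 ≤ s → HasDerivWithinAt V (D s) (Ici 0) s := by
    intro s hs
    refine HasDerivWithinAt.fun_sum fun i hi => ?_
    have hiN : i ≤ N := by rw [Finset.mem_range] at hi; omega
    have hxi := hx.2 i hiN s hs
    have hyi := hy.2 i hiN s hs
    have h := (hxi.sub hyi).pow 2
    refine h.congr_deriv ?_
    push_cast
    simp only [Pi.sub_apply]
    ring
  have hbound : ∀ s ∈ Ico 0 t, ‖D s‖ ≤ (12 * M) * ‖V s‖ + 0 := by
    intro s hs
    rw [Real.norm_eq_abs, Real.norm_eq_abs, abs_of_nonneg (hVnonneg s), add_zero]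
    refine sum_bound N hN M hMpos.le (fun i => x s i - y s i)
      (fun i => particleRHS ε N (x s) i - particleRHS ε N (y s) i) ?_
    intro i hi
    rw [Finset.mem_range] at hi
    exact rhs_lip ε hε N (x s) (y s) (hx.1 s hs.1) (hy.1 s hs.1) i (by omega)
  have hcont : ContinuousOn V (Icc 0 t) := fun s hs =>
    ((hVd s hs.1).continuousWithinAt).mono fun r hr => hr.1
  have hder : ∀ s ∈ Ico 0 t, HasDerivWithinAt V (D s) (Ici s) s := fun s hs =>
    (hVd s hs.1).mono (Ici_subset_Ici.2 hs.1)
  have h0 : ‖V 0‖ ≤ V 0 := by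
    rw [Real.norm_eq_abs, abs_of_nonneg (hVnonneg 0)]
  have hg := norm_le_gronwallBound_of_norm_deriv_right_le hcont hder h0 hbound t ⟨ht, le_rfl⟩
  rw [gronwallBound_ε0, sub_zero, Real.norm_eq_abs, abs_of_nonneg (hVnonneg t)] at hg
  -- hg : V t ≤ V 0 * Real.exp (12 * M * t)
  show Real.sqrt ((1 / (N : ℝ)) * V t) ≤
      Real.exp (6 * M * t) * Real.sqrt ((1 / (N : ℝ)) * V 0)
  have hstep : (1 / (N : ℝ)) * V t ≤ (Real.exp (6 * M * t)) ^ 2 * ((1 / (N : ℝ)) * V 0) := by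
    have hexp : (Real.exp (6 * M * t)) ^ 2 = Real.exp (12 * M * t) := by
      rw [sq, ← Real.exp_add]; ring_nf
    rw [hexp]
    calc (1 / (N : ℝ)) * V t ≤ (1 / (N : ℝ)) * (V 0 * Real.exp (12 * M * t)) :=
        mul_le_mul_of_nonneg_left hg (by positivity)
      _ = Real.exp (12 * M * t) * ((1 / (N : ℝ)) * V 0) := by ring
  calc Real.sqrt ((1 / (N : ℝ)) * V t) ≤
      Real.sqrt ((Real.exp (6 * M * t)) ^ 2 * ((1 / (N : ℝ)) * V 0)) := Real.sqrt_le_sqrt hstep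
    _ = Real.exp (6 * M * t) * Real.sqrt ((1 / (N : ℝ)) * V 0) := by
        rw [Real.sqrt_mul (sq_nonneg _), Real.sqrt_sq (Real.exp_pos _).le]
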